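/- Let K = {∑_{n≥1} a_n 4^{−n} : a_n ∈ {0,3}} be the middle-half Cantor set. Then for all r with 0 < r ≤ 1, the Lebesgue measure of the open r-neighbourhood of K satisfies c·r^{1/2} ≤ m(N_r(K)) ≤ C·r^{1/2} for absolute constants 0 < c ≤ C. -/

import Mathlib

open MeasureTheory
open scoped ENNReal NNReal

/-- The middle-half Cantor set `K = {∑ aₙ 4⁻ⁿ : aₙ ∈ {0,3}}`. -/
def cantorK : Set ℝ :=
  {x | ∃ a : ℕ → ℝ, (∀ n, a n = 0 ∨ a n = 3) ∧
    x = ∑' n : ℕ, a n * (4 : ℝ) ^ (-((n : ℤ) + 1))}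

/-- The n-th generation approximant `Kₙ` of the middle-half Cantor set: the first `n`
digits lie in {0,3}, the remaining digits are arbitrary in {0,1,2,3}. -/
def cantorKn (n : ℕ) : Set ℝ :=
  {x | ∃ a : ℕ → ℝ, (∀ k, a k = 0 ∨ a k = 1 ∨ a k = 2 ∨ a k = 3) ∧
    (∀ k < n, a k = 0 ∨ a k = 3) ∧
    x = ∑' k : ℕ, a k * (4 : ℝ) ^ (-((k : ℤ) + 1))}

lemma pow4 (k : ℕ) : (4 : ℝ) ^ (-((k : ℤ) + 1)) = (1/4 : ℝ) ^ (k+1) := by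
  have h : (-((k:ℤ)+1)) = -((k+1 : ℕ) : ℤ) := by push_cast; ring
  rw [h, zpow_neg, zpow_natCast, ← inv_pow, one_div]

lemma summable_geom_shift : Summable (fun k : ℕ => (1/4 : ℝ) ^ (k+1)) :=
  (summable_geometric_of_lt_one (by norm_num) (by norm_num)).comp_injective
    (add_left_injective 1)

lemma summable_aux {a : ℕ → ℝ} (ha : ∀ k, 0 ≤ a k ∧ a k ≤ 3) :
    Summable (fun k => a k * (1/4 : ℝ) ^ (k+1)) := by
  have h1 : ∀ k, 0 ≤ a k * (1/4 : ℝ) ^ (k+1) := fun k =>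
    mul_nonneg (ha k).1 (by positivity)
  have h2 : ∀ k, a k * (1/4 : ℝ) ^ (k+1) ≤ 3 * (1/4:ℝ)^(k+1) := fun k =>
    mul_le_mul_of_nonneg_right (ha k).2 (by positivity)
  exact Summable.of_nonneg_of_le h1 h2 (summable_geom_shift.mul_left 3)

/-- weight -/
noncomputable def w (k : ℕ) : ℝ := (1/4 : ℝ) ^ (k+1)

lemma w_pos (k : ℕ) : 0 < w k := by unfold w; positivity

/-- digits of a level-n point -/
def digs (n : ℕ) (s : Fin n → Bool) : ℕ → ℝ :=
  fun k => if h : k < n then (if s ⟨k, h⟩ then 3 else 0) else 0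

lemma digs_mem (n s k) : digs n s k = 0 ∨ digs n s k = 3 := by
  unfold digs; split <;> [skip; exact Or.inl rfl]
  split <;> [exact Or.inr rfl; exact Or.inl rfl]

lemma digs_zero_of_ge (n s) {k} (h : n ≤ k) : digs n s k = 0 := by
  unfold digs; rw [dif_neg (by omega)]

/-- level-n points -/
noncomputable def cpt (n : ℕ) (s : Fin n → Bool) : ℝ :=
  ∑ k ∈ Finset.range n, digs n s k * w k

lemma mem_bounds {a : ℕ → ℝ} (ha : ∀ k, a k = 0 ∨ a k = 3) (k : ℕ) :
    0 ≤ a k ∧ a k ≤ 3 := by rcases ha k with h | h <;> rw [h] <;> norm_num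

lemma cpt_mem (n : ℕ) (s : Fin n → Bool) : cpt n s ∈ cantorK := by
  refine ⟨digs n s, digs_mem n s, ?_⟩
  have h0 : ∀ k ∉ Finset.range n, digs n s k * (4:ℝ) ^ (-((k:ℤ)+1)) = 0 := by
    intro k hk
    rw [digs_zero_of_ge n s (by simpa using hk), zero_mul]
  rw [tsum_eq_sum h0]
  unfold cpt w
  exact Finset.sum_congr rfl fun k _ => by rw [pow4]

lemma geom_partial_le (M : ℕ) : ∑ i ∈ Finset.range M, (1/4:ℝ)^i ≤ 4/3 := by
  have h := Summable.sum_le_tsum (Finset.range M) (fun i _ => by positivity)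
    (summable_geometric_of_lt_one (by norm_num : (0:ℝ) ≤ 1/4) (by norm_num))
  rw [tsum_geometric_of_lt_one (by norm_num) (by norm_num)] at h
  calc ∑ i ∈ Finset.range M, (1/4:ℝ)^i ≤ (1 - 1/4)⁻¹ := h
    _ = 4/3 := by norm_num

lemma tail_bound (j n : ℕ) : ∑ k ∈ Finset.Ico (j+1) n, 3 * w k ≤ (1/4:ℝ)^(j+1) := by
  rcases le_or_gt (j+1) n with h | h
  · rw [Finset.sum_Ico_eq_sum_range]
    have : ∀ i ∈ Finset.range (n - (j+1)), 3 * w (j+1+i) = 3 * (1/4:ℝ)^(j+2) * (1/4:ℝ)^i := by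
      intro i _
      unfold w
      rw [mul_assoc, ← pow_add]
      ring_nf
    rw [Finset.sum_congr rfl this, ← Finset.mul_sum]
    calc 3 * (1/4:ℝ)^(j+2) * ∑ i ∈ Finset.range (n-(j+1)), (1/4:ℝ)^i
        ≤ 3 * (1/4:ℝ)^(j+2) * (4/3) := by
          apply mul_le_mul_of_nonneg_left (geom_partial_le _) (by positivity)
      _ = (1/4:ℝ)^(j+1) := by ring
  · rw [Finset.Ico_eq_empty (by omega), Finset.sum_empty]; positivity

/-- The separation lemma: distinct level-n points are `2·4⁻ⁿ` apart. -/
lemma cpt_sep {n : ℕ} {s t : Fin n → Bool} (hst : s ≠ t) :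
    2 * (1/4:ℝ)^n ≤ |cpt n s - cpt n t| := by
  have hex : ∃ k, digs n s k ≠ digs n t k := by
    obtain ⟨k, hk⟩ := Function.ne_iff.mp hst
    refine ⟨k, ?_⟩
    unfold digs
    rw [dif_pos k.isLt, dif_pos k.isLt]
    cases hs : s ⟨k, k.isLt⟩ <;> cases ht : t ⟨k, k.isLt⟩ <;>
      simp_all [Fin.eta] <;> norm_num
  classical
  set j := Nat.find hex with hj
  have hjne : digs n s j ≠ digs n t j := Nat.find_spec hex
  have hjmin : ∀ i < j, digs n s i = digs n t i := fun i hi => by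
    have := Nat.find_min hex hi; tauto
  have hjn : j < n := by
    by_contra hge
    exact hjne (by rw [digs_zero_of_ge n s (by omega), digs_zero_of_ge n t (by omega)])
  -- difference as a sum
  have hD : cpt n s - cpt n t =
      (digs n s j - digs n t j) * w j
      + ∑ k ∈ Finset.Ico (j+1) n, (digs n s k - digs n t k) * w k := by
    unfold cpt
    rw [← Finset.sum_sub_distrib]
    have hsplit : Finset.range n = Finset.range (j+1) ∪ Finset.Ico (j+1) n := by
      rw [Finset.range_eq_Ico, Finset.range_eq_Ico, Finset.Ico_union_Ico_eq_Ico (by omega) (by omega)]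
    rw [hsplit, Finset.sum_union (by
      rw [Finset.range_eq_Ico]; exact Finset.Ico_disjoint_Ico_consecutive 0 (j+1) n)]
    congr 1
    · rw [Finset.sum_range_succ]
      have : ∀ k ∈ Finset.range j,
          digs n s k * w k - digs n t k * w k = 0 := by
        intro k hk
        rw [hjmin k (Finset.mem_range.mp hk)]; ring
      rw [Finset.sum_congr rfl this, Finset.sum_const_zero, zero_add]
      ring
    · exact Finset.sum_congr rfl fun k _ => by ring
  have habs3 : |digs n s j - digs n t j| = 3 := by
    rcases digs_mem n s j with h1 | h1 <;> rcases digs_mem n t j with h2 | h2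
    · exact absurd (h1.trans h2.symm) hjne
    · rw [h1, h2]; norm_num
    · rw [h1, h2]; norm_num
    · exact absurd (h1.trans h2.symm) hjne
  have hT : |∑ k ∈ Finset.Ico (j+1) n, (digs n s k - digs n t k) * w k| ≤ (1/4:ℝ)^(j+1) := by
    refine le_trans (Finset.abs_sum_le_sum_abs _ _) (le_trans ?_ (tail_bound j n))
    apply Finset.sum_le_sum
    intro k _
    rw [abs_mul, abs_of_pos (w_pos k)]
    apply mul_le_mul_of_nonneg_right _ (w_pos k).le
    rcases digs_mem n s k with h1 | h1 <;> rcases digs_mem n t k with h2 | h2 <;>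
      rw [h1, h2] <;> norm_num
  have hwj : w j = (1/4:ℝ)^(j+1) := rfl
  have hmain : 2 * (1/4:ℝ)^(j+1) ≤ |cpt n s - cpt n t| := by
    rw [hD]
    have h1 : |(digs n s j - digs n t j) * w j| = 3 * (1/4:ℝ)^(j+1) := by
      rw [abs_mul, habs3, abs_of_pos (w_pos j), hwj]
    calc 2 * (1/4:ℝ)^(j+1) = 3 * (1/4:ℝ)^(j+1) - (1/4:ℝ)^(j+1) := by ring
      _ ≤ |(digs n s j - digs n t j) * w j|
          - |∑ k ∈ Finset.Ico (j+1) n, (digs n s k - digs n t k) * w k| := by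
            rw [h1]; linarith [hT]
      _ ≤ _ := by
            have := abs_sub_abs_le_abs_sub ((digs n s j - digs n t j) * w j)
              (-(∑ k ∈ Finset.Ico (j+1) n, (digs n s k - digs n t k) * w k))
            rw [abs_neg, sub_neg_eq_add] at this
            linarith
  refine le_trans ?_ hmain
  have : (1/4:ℝ)^n ≤ (1/4:ℝ)^(j+1) :=
    pow_le_pow_of_le_one (by norm_num) (by norm_num) (by omega)
  linarith

/-- The covering lemma: every point of K is within `4⁻ⁿ` of a level-n point. -/
lemma cpt_cover {y : ℝ} (hy : y ∈ cantorK) (n : ℕ) :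
    ∃ s : Fin n → Bool, dist y (cpt n s) ≤ (1/4:ℝ)^n := by
  classical
  obtain ⟨a, ha, hy⟩ := hy
  have hb := mem_bounds ha
  have hsum : Summable (fun k => a k * (1/4:ℝ)^(k+1)) := summable_aux hb
  have hy' : y = ∑' k, a k * (1/4:ℝ)^(k+1) := by
    rw [hy]; exact tsum_congr fun k => by rw [pow4]
  refine ⟨fun k => if a (k:ℕ) = 3 then true else false, ?_⟩
  have hdig : ∀ k ∈ Finset.range n,
      digs n (fun k => if a (k:ℕ) = 3 then true else false) k * w k = a k * (1/4:ℝ)^(k+1) := by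
    intro k hk
    have hkn := Finset.mem_range.mp hk
    rcases ha k with h | h <;> simp [digs, w, hkn, h]
  have hsplit := hsum.sum_add_tsum_nat_add n
  have htail_sum : Summable (fun i => a (i+n) * (1/4:ℝ)^((i+n)+1)) :=
    hsum.comp_injective (add_left_injective n)
  have htail_nonneg : 0 ≤ ∑' i, a (i+n) * (1/4:ℝ)^((i+n)+1) :=
    tsum_nonneg fun i => mul_nonneg (hb _).1 (by positivity)
  have htail_le : ∑' i, a (i+n) * (1/4:ℝ)^((i+n)+1) ≤ (1/4:ℝ)^n := by
    have hle : ∀ i, a (i+n) * (1/4:ℝ)^((i+n)+1) ≤ 3 * (1/4:ℝ)^(n+1) * (1/4:ℝ)^i := by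
      intro i
      have h1 : a (i+n) * (1/4:ℝ)^((i+n)+1) ≤ 3 * (1/4:ℝ)^((i+n)+1) :=
        mul_le_mul_of_nonneg_right (hb _).2 (by positivity)
      calc a (i+n) * (1/4:ℝ)^((i+n)+1) ≤ 3 * (1/4:ℝ)^((i+n)+1) := h1
        _ = 3 * (1/4:ℝ)^(n+1) * (1/4:ℝ)^i := by rw [mul_assoc, ← pow_add]; ring_nf
    have hsum2 : Summable (fun i : ℕ => 3 * (1/4:ℝ)^(n+1) * (1/4:ℝ)^i) :=
      (summable_geometric_of_lt_one (by norm_num) (by norm_num)).mul_left _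
    calc ∑' i, a (i+n) * (1/4:ℝ)^((i+n)+1)
        ≤ ∑' i : ℕ, 3 * (1/4:ℝ)^(n+1) * (1/4:ℝ)^i := htail_sum.tsum_le_tsum hle hsum2
      _ = 3 * (1/4:ℝ)^(n+1) * (1-1/4)⁻¹ := by
          rw [tsum_mul_left, tsum_geometric_of_lt_one (by norm_num) (by norm_num)]
      _ = (1/4:ℝ)^n := by rw [pow_succ]; ring
  have hcpt : cpt n (fun k => if a (k:ℕ) = 3 then true else false)
      = ∑ k ∈ Finset.range n, a k * (1/4:ℝ)^(k+1) := by
    unfold cpt; exact Finset.sum_congr rfl hdig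
  rw [Real.dist_eq, hy', hcpt, ← hsplit]
  rw [abs_of_nonneg (by linarith)]
  linarith

lemma enn_helper (n : ℕ) (x : ℝ) (hx : 0 ≤ x) :
    ((2^n : ℕ) : ℝ≥0∞) * ENNReal.ofReal x = ENNReal.ofReal ((2:ℝ)^n * x) := by
  rw [ENNReal.ofReal_mul (by positivity), ENNReal.ofReal_pow (by norm_num)]
  norm_num

/-- The middle-half Cantor set has Minkowski dimension 1/2: the Lebesgue measure of
its open `r`-neighbourhood is comparable to `√r` for `0 < r ≤ 1`. -/
theorem stmt10 : ∃ c C : ℝ, 0 < c ∧ c ≤ C ∧ ∀ r : ℝ, 0 < r → r ≤ 1 →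
    ENNReal.ofReal (c * Real.sqrt r) ≤ volume (Metric.thickening r cantorK) ∧
    volume (Metric.thickening r cantorK) ≤ ENNReal.ofReal (C * Real.sqrt r) := by
  classical
  refine ⟨1, 8, one_pos, by norm_num, fun r hr hr1 => ?_⟩
  have hex : ∃ m : ℕ, (1/4:ℝ)^(m+1) < r := by
    obtain ⟨m, hm⟩ := exists_pow_lt_of_lt_one hr (by norm_num : (1/4:ℝ) < 1)
    exact ⟨m, lt_of_le_of_lt
      (pow_le_pow_of_le_one (by norm_num) (by norm_num) (by omega)) hm⟩
  set n := Nat.find hex with hn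
  have hn1 : (1/4:ℝ)^(n+1) < r := Nat.find_spec hex
  have hn2 : r ≤ (1/4:ℝ)^n := by
    rcases Nat.eq_zero_or_pos n with h0 | h0
    · rw [h0, pow_zero]; exact hr1
    · have hmin := Nat.find_min hex (show n - 1 < n by omega)
      have hn' : n - 1 + 1 = n := by omega
      rw [hn'] at hmin
      exact le_of_not_gt hmin
  have hq2 : ((1/2:ℝ)^(n+1))^2 = (1/4:ℝ)^(n+1) := by
    rw [← pow_mul, mul_comm, pow_mul]; norm_num
  have hs1 : (1/2:ℝ)^(n+1) < Real.sqrt r :=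
    Real.lt_sqrt_of_sq_lt (by rw [hq2]; exact hn1)
  have hsr : 0 < Real.sqrt r := Real.sqrt_pos.mpr hr
  -- lower bound
  have hsub : (⋃ s : Fin n → Bool, Metric.ball (cpt n s) r) ⊆ Metric.thickening r cantorK :=
    Set.iUnion_subset fun s => Metric.ball_subset_thickening (cpt_mem n s) r
  have hdisj : Pairwise (Function.onFun Disjoint
      fun s : Fin n → Bool => Metric.ball (cpt n s) r) := by
    intro s t hst
    apply Metric.ball_disjoint_ball
    rw [Real.dist_eq]
    calc r + r ≤ 2 * (1/4:ℝ)^n := by linarith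
      _ ≤ |cpt n s - cpt n t| := cpt_sep hst
  have hvol : volume (⋃ s : Fin n → Bool, Metric.ball (cpt n s) r)
      = ((2^n : ℕ) : ℝ≥0∞) * ENNReal.ofReal (2*r) := by
    rw [measure_iUnion hdisj (fun s => measurableSet_ball), tsum_fintype]
    simp only [Real.volume_ball, Finset.sum_const, Finset.card_univ, Fintype.card_fun,
      Fintype.card_bool, Fintype.card_fin, nsmul_eq_mul]
  have hlow : ENNReal.ofReal (1 * Real.sqrt r) ≤ volume (Metric.thickening r cantorK) := by
    refine le_trans ?_ (le_trans (le_of_eq hvol.symm) (measure_mono hsub))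
    rw [enn_helper n _ (by positivity)]
    apply ENNReal.ofReal_le_ofReal
    have h3 : (2:ℝ)^(n+1) * (1/2:ℝ)^(n+1) = 1 := by rw [← mul_pow]; norm_num
    calc 1 * Real.sqrt r = 2^(n+1) * (1/2:ℝ)^(n+1) * Real.sqrt r := by rw [h3]
      _ ≤ 2^(n+1) * (Real.sqrt r * Real.sqrt r) := by
          rw [mul_assoc]
          exact mul_le_mul_of_nonneg_left
            (mul_le_mul_of_nonneg_right hs1.le hsr.le) (by positivity)
      _ = (2:ℝ)^n * (2*r) := by rw [Real.mul_self_sqrt hr.le, pow_succ]; ring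
  -- upper bound
  have hcov : Metric.thickening r cantorK ⊆
      ⋃ s : Fin n → Bool, Metric.ball (cpt n s) ((1/4:ℝ)^n + r) := by
    intro x hx
    obtain ⟨y, hyK, hxy⟩ := Metric.mem_thickening_iff.mp hx
    obtain ⟨s, hs⟩ := cpt_cover hyK n
    refine Set.mem_iUnion.mpr ⟨s, ?_⟩
    rw [Metric.mem_ball]
    calc dist x (cpt n s) ≤ dist x y + dist y (cpt n s) := dist_triangle _ _ _
      _ < r + (1/4:ℝ)^n := add_lt_add_of_lt_of_le hxy hs
      _ = (1/4:ℝ)^n + r := by ring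
  have hhigh : volume (Metric.thickening r cantorK) ≤ ENNReal.ofReal (8 * Real.sqrt r) := by
    refine le_trans (measure_mono hcov) (le_trans (measure_iUnion_le _) ?_)
    rw [tsum_fintype]
    have : ∀ s : Fin n → Bool, volume (Metric.ball (cpt n s) ((1/4:ℝ)^n + r))
        = ENNReal.ofReal (2 * ((1/4:ℝ)^n + r)) := fun s => Real.volume_ball _ _
    rw [Finset.sum_congr rfl (fun s _ => this s), Finset.sum_const, Finset.card_univ,
      Fintype.card_fun, Fintype.card_bool, Fintype.card_fin, nsmul_eq_mul]
    push_cast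
    rw [show ((2:ℝ≥0∞))^n = ((2^n : ℕ) : ℝ≥0∞) by push_cast; ring,
      enn_helper n _ (by positivity)]
    apply ENNReal.ofReal_le_ofReal
    have hhalf : (2:ℝ)^n * (1/4:ℝ)^n = (1/2:ℝ)^n := by
      rw [← mul_pow]; norm_num
    have h8 : 4 * (1/2:ℝ)^n = 8 * (1/2:ℝ)^(n+1) := by rw [pow_succ]; ring
    calc (2:ℝ)^n * (2 * ((1/4:ℝ)^n + r))
        ≤ (2:ℝ)^n * (2 * (2 * (1/4:ℝ)^n)) := by
          apply mul_le_mul_of_nonneg_left _ (by positivity)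
          linarith
      _ = 4 * (1/2:ℝ)^n := by rw [show (2:ℝ)^n * (2 * (2 * (1/4:ℝ)^n)) = 4 * ((2:ℝ)^n * (1/4:ℝ)^n) by ring, hhalf]
      _ = 8 * (1/2:ℝ)^(n+1) := h8
      _ ≤ 8 * Real.sqrt r := by linarith
  exact ⟨hlow, hhigh⟩
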